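/- Let A be a real symmetric (2n−1)×(2n−1) matrix, let Ã be the (2n−2)×(2n−2) matrix obtained by deleting the last row and column of A, and let Â be the 2n×2n bordered matrix whose first row is (0,…,0,1), middle rows (0 | Ã | v), last row (1, vᵀ, α), where A = (Ã v; vᵀ α). Then for every integer j ≥ 0, the elementary symmetric functions of eigenvalues satisfy e_{2j+1}(Â) = e_{2j+1}(A) − e_{2j−1}(Ã), with the convention that e_k(M) = 0 whenever k < 0 or k exceeds the size of M. In particular, all odd-degree elementary symmetric functions of the eigenvalues of Â vanish if and only if e_{2j+1}(A) = e_{2j−1}(Ã) for all j ≥ 0. -/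

import Mathlib

open Polynomial Matrix

/-- The `k`-th elementary symmetric function of the eigenvalues of a square real
matrix, indexed by an integer `k`, with the convention that it vanishes for
`k < 0` or `k` larger than the size of the matrix.  For `0 ≤ k ≤ m` it equals
`(-1)^k` times the coefficient of `X^(m-k)` in the characteristic polynomial. -/
noncomputable def esymmEig {ι : Type*} [Fintype ι] [DecidableEq ι]
    (M : Matrix ι ι ℝ) (k : ℤ) : ℝ :=
  if 0 ≤ k ∧ k ≤ (Fintype.card ι : ℤ) then
    (-1) ^ k.toNat * M.charpoly.coeff (Fintype.card ι - k.toNat)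
  else 0

lemma charmatrix_submatrix_castSucc {m : ℕ} (A : Matrix (Fin (m+1)) (Fin (m+1)) ℝ) :
    (charmatrix A).submatrix Fin.castSucc Fin.castSucc
      = charmatrix (A.submatrix Fin.castSucc Fin.castSucc) := by
  ext i j
  by_cases h : i = j
  · subst h; simp [charmatrix_apply]
  · rw [submatrix_apply, charmatrix_apply_ne _ _ _ ((Fin.castSucc_injective _).ne h),
      charmatrix_apply_ne _ _ _ h, submatrix_apply]

lemma charpoly_bordered {m : ℕ} (A : Matrix (Fin (m+1)) (Fin (m+1)) ℝ)
    (Ahat : Matrix (Fin 1 ⊕ Fin (m+1)) (Fin 1 ⊕ Fin (m+1)) ℝ)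
    (hAhat : Ahat = Matrix.fromBlocks 0
      (fun _ j => if j = Fin.last m then (1 : ℝ) else 0)
      (fun i _ => if i = Fin.last m then (1 : ℝ) else 0) A) :
    Ahat.charpoly = X * A.charpoly - (A.submatrix Fin.castSucc Fin.castSucc).charpoly := by
  set φ : ℝ[X] →+* RatFunc ℝ := algebraMap ℝ[X] (RatFunc ℝ) with hφ
  have hinj : Function.Injective φ := RatFunc.algebraMap_injective ℝ
  apply hinj
  set qA := A.charpoly with hqA
  set qT := (A.submatrix Fin.castSucc Fin.castSucc).charpoly with hqT
  have hqA0 : φ qA ≠ 0 := by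
    simpa using fun h => A.charpoly_monic.ne_zero (hinj (by simpa using h))
  set D : Matrix (Fin (m+1)) (Fin (m+1)) (RatFunc ℝ) := (charmatrix A).map φ with hD
  have hdetD : D.det = φ qA := (RingHom.map_det φ (charmatrix A)).symm
  have hU : IsUnit D.det := by rw [hdetD]; exact (hqA0).isUnit
  have : Invertible D := D.invertibleOfIsUnitDet hU
  have hadj : D.adjugate (Fin.last m) (Fin.last m) = φ qT := by
    rw [adjugate_fin_succ_eq_det_submatrix]
    simp only [Fin.succAbove_last, Fin.val_last]
    rw [submatrix_map, charmatrix_submatrix_castSucc]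
    have he : (-1 : RatFunc ℝ) ^ (m + m) = 1 := Even.neg_one_pow ⟨m, rfl⟩
    rw [he, one_mul, ← RingHom.mapMatrix_apply, ← RingHom.map_det φ]
    rfl
  have hinv : (⅟D) (Fin.last m) (Fin.last m) = (φ qA)⁻¹ * φ qT := by
    rw [invOf_eq_nonsing_inv, inv_def, hdetD]
    simp [Matrix.smul_apply, hadj, Ring.inverse_eq_inv]
  have lhs : φ Ahat.charpoly = φ qA * (φ X - (φ qA)⁻¹ * φ qT) := by
    rw [Matrix.charpoly, RingHom.map_det, hAhat]
    erw [charmatrix_fromBlocks]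
    rw [RingHom.mapMatrix_apply, fromBlocks_map,
      det_fromBlocks₂₂]
    congr 1
    rw [det_fin_one]
    have hcorner : ((charmatrix (0 : Matrix (Fin 1) (Fin 1) ℝ)).map φ) 0 0 = φ X := by
      simp [charmatrix_apply]
    have hmul : (((- Matrix.map (fun (_ : Fin 1) j => if j = Fin.last m then (1:ℝ) else 0) C).map φ)
        * ⅟((charmatrix A).map φ)
        * ((- Matrix.map (fun i (_ : Fin 1) => if i = Fin.last m then (1:ℝ) else 0) C).map φ)) 0 0
        = (φ qA)⁻¹ * φ qT := by
      rw [← hinv]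
      simp only [Matrix.mul_apply, Matrix.map_apply, Matrix.neg_apply]
      rw [Finset.sum_eq_single (Fin.last m)]
      · rw [Finset.sum_eq_single (Fin.last m)]
        · simp [hD, Matrix.map, invOf_eq_nonsing_inv]
          exact congrFun (congrFun (@invOf_eq_nonsing_inv _ _ _ _ _ D this) _) _
        · intro b _ hb
          simp [hb, Matrix.map]
        · simp
      · intro b _ hb
        rw [Finset.sum_eq_single (Fin.last m)]
        · simp [hb, Matrix.map]
        · intro c _ hc; simp [hc, Matrix.map]
        · simp
      · simp
    rw [Matrix.sub_apply, hcorner]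
    exact congrArg (fun t => φ X - t) hmul
  rw [lhs, map_sub, _root_.map_mul]
  field_simp

/-- For a symmetric `(2n-1)×(2n-1)` matrix `A` (here of size `2n+1`
with `n ≥ 0`, so that the size is odd), with `Ã` obtained by deleting the last row
and column and `Â` the bordered matrix of even size, one has
`e_{2j+1}(Â) = e_{2j+1}(A) - e_{2j-1}(Ã)` for all integers `j ≥ 0`; in particular
all odd-degree elementary symmetric functions of the eigenvalues of `Â` vanish
iff `e_{2j+1}(A) = e_{2j-1}(Ã)` for all `j ≥ 0`. -/
theorem esymm_bordered (n : ℕ) (hn : 1 ≤ n + 1)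
    (A : Matrix (Fin (2 * n + 1)) (Fin (2 * n + 1)) ℝ) (hA : A.IsSymm)
    (Atil : Matrix (Fin (2 * n)) (Fin (2 * n)) ℝ)
    (hAtil : Atil = A.submatrix Fin.castSucc Fin.castSucc)
    (Ahat : Matrix (Fin 1 ⊕ Fin (2 * n + 1)) (Fin 1 ⊕ Fin (2 * n + 1)) ℝ)
    (hAhat : Ahat = Matrix.fromBlocks 0
      (fun _ j => if j = Fin.last (2 * n) then (1 : ℝ) else 0)
      (fun i _ => if i = Fin.last (2 * n) then (1 : ℝ) else 0) A) :
    (∀ j : ℤ, 0 ≤ j →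
      esymmEig Ahat (2 * j + 1) = esymmEig A (2 * j + 1) - esymmEig Atil (2 * j - 1)) ∧
    ((∀ j : ℤ, 0 ≤ j → esymmEig Ahat (2 * j + 1) = 0) ↔
      (∀ j : ℤ, 0 ≤ j → esymmEig A (2 * j + 1) = esymmEig Atil (2 * j - 1))) := by
  have hp : Ahat.charpoly = X * A.charpoly - Atil.charpoly := by
    rw [hAtil]; exact charpoly_bordered A Ahat hAhat
  have cardH : Fintype.card (Fin 1 ⊕ Fin (2 * n + 1)) = 2 * n + 2 := by simp; omega
  have cardA : Fintype.card (Fin (2 * n + 1)) = 2 * n + 1 := Fintype.card_fin _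
  have cardT : Fintype.card (Fin (2 * n)) = 2 * n := Fintype.card_fin _
  have hqTdeg : ∀ k, 2 * n < k → Atil.charpoly.coeff k = 0 := by
    intro k hk
    apply Polynomial.coeff_eq_zero_of_natDegree_lt
    rwa [Atil.charpoly_natDegree_eq_dim, cardT]
  have main : ∀ j : ℤ, 0 ≤ j →
      esymmEig Ahat (2 * j + 1) = esymmEig A (2 * j + 1) - esymmEig Atil (2 * j - 1) := by
    intro j hj
    lift j to ℕ using hj with m
    by_cases hmn : m ≤ n
    · -- in range
      have h1 : esymmEig Ahat (2 * (m : ℤ) + 1)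
          = - (A.charpoly.coeff (2 * n - 2 * m) - Atil.charpoly.coeff (2 * n - 2 * m + 1)) := by
        rw [esymmEig, if_pos (by rw [cardH]; constructor <;> push_cast <;> omega)]
        have ht : (2 * (m : ℤ) + 1).toNat = 2 * m + 1 := by omega
        have hi : Fintype.card (Fin 1 ⊕ Fin (2 * n + 1)) - (2 * m + 1)
            = (2 * n - 2 * m) + 1 := by rw [cardH]; omega
        rw [ht, hi, hp, Polynomial.coeff_sub, Polynomial.coeff_X_mul,
          Odd.neg_one_pow ⟨m, by ring⟩]
        ring
      have h2 : esymmEig A (2 * (m : ℤ) + 1) = - A.charpoly.coeff (2 * n - 2 * m) := by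
        rw [esymmEig, if_pos (by rw [cardA]; constructor <;> push_cast <;> omega)]
        have ht : (2 * (m : ℤ) + 1).toNat = 2 * m + 1 := by omega
        have hi : Fintype.card (Fin (2 * n + 1)) - (2 * m + 1) = 2 * n - 2 * m := by
          rw [cardA]; omega
        rw [ht, hi, Odd.neg_one_pow ⟨m, by ring⟩]
        ring
      have h3 : esymmEig Atil (2 * (m : ℤ) - 1)
          = - Atil.charpoly.coeff (2 * n - 2 * m + 1) := by
        rcases Nat.eq_zero_or_pos m with hm0 | hm1
        · subst hm0
          rw [esymmEig, if_neg (by rintro ⟨h1, -⟩; omega), hqTdeg _ (by omega)]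
          simp
        · rw [esymmEig, if_pos (by rw [cardT]; constructor <;> push_cast <;> omega)]
          have ht : (2 * (m : ℤ) - 1).toNat = 2 * m - 1 := by omega
          have hi : Fintype.card (Fin (2 * n)) - (2 * m - 1) = 2 * n - 2 * m + 1 := by
            rw [cardT]; omega
          have hodd : Odd (2 * m - 1) := ⟨m - 1, by omega⟩
          rw [ht, hi, Odd.neg_one_pow hodd]
          ring
      rw [h1, h2, h3]; ring
    · -- out of range: everything vanishes
      rw [esymmEig, if_neg (by rw [cardH]; push_cast; omega),
        esymmEig, if_neg (by rw [cardA]; push_cast; omega),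
        esymmEig, if_neg (by rw [cardT]; push_cast; omega)]
      ring
  refine ⟨main, ?_⟩
  constructor
  · intro h j hj
    have := main j hj
    rw [h j hj] at this
    linarith
  · intro h j hj
    rw [main j hj, h j hj]
    ring
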